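/- Arcsine lower bound for the phase integral: let 0 < k₀ ≤ k₁ < k₂ ≤ 1 and let η ≥ V(k₁). Set H = V(k₁) − (1 + 1/k₀)·(1 − k₁)² and ρ = √((η − H)/(1 + 1/k₀)) (so ρ ≥ 1 − k₁). Then ∫_{k₁}^{k₂} (η − V(k))^{−1/2} dk > (1 + 1/k₀)^{−1/2}·( arcsin((1 − k₁)/ρ) − arcsin((1 − k₂)/ρ) ). In the special case η = V(k₁) one has ρ = 1 − k₁. -/

import Mathlib

open Real Set MeasureTheory

noncomputable def V (k : ℝ) : ℝ := k ^ 2 - 2 * Real.log k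

lemma V_hasDerivAt {k : ℝ} (hk : 0 < k) : HasDerivAt V (2*k - 2/k) k := by
  have h1 : HasDerivAt (fun x : ℝ => x ^ 2) (2*k) k := by
    simpa using hasDerivAt_pow 2 k
  have h2 : HasDerivAt (fun x : ℝ => 2 * Real.log x) (2 / k) k := by
    simpa [div_eq_mul_inv, mul_comm] using (Real.hasDerivAt_log hk.ne').const_mul 2
  exact h1.sub h2

lemma V_measurable : Measurable V := by
  unfold V
  exact (measurable_id.pow_const 2).sub (Real.measurable_log.const_mul 2)

lemma V_continuousOn {s : Set ℝ} (hs : ∀ x ∈ s, (0:ℝ) < x) : ContinuousOn V s :=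
  fun x hx => ((V_hasDerivAt (hs x hx)).differentiableAt.continuousAt).continuousWithinAt

lemma V_convexOn : ConvexOn ℝ (Set.Ioi (0:ℝ)) V := by
  have h1 : ConvexOn ℝ (Set.Ioi (0:ℝ)) (fun x : ℝ => x ^ 2) :=
    (convexOn_pow 2).subset Set.Ioi_subset_Ici_self (convex_Ioi 0)
  have h2 : ConcaveOn ℝ (Set.Ioi (0:ℝ)) (fun x : ℝ => 2 * Real.log x) := by
    have := strictConcaveOn_log_Ioi.concaveOn.smul (c := (2:ℝ)) (by norm_num)
    simpa [smul_eq_mul] using this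
  have h3 := h1.sub h2
  have he : (fun x : ℝ => x ^ 2) - (fun x : ℝ => 2 * Real.log x) = V := by
    funext x
    simp [V, Pi.sub_apply]
  exact he ▸ h3

set_option maxHeartbeats 1600000 in
theorem stmt_6 (k₀ k₁ k₂ η : ℝ) (h₀ : 0 < k₀) (h₀₁ : k₀ ≤ k₁) (h₁₂ : k₁ < k₂)
    (h₂ : k₂ ≤ 1) (hη : V k₁ ≤ η) :
    (∫ k in k₁..k₂, (Real.sqrt (η - V k))⁻¹) >
      (Real.sqrt (1 + 1 / k₀))⁻¹ *
        (Real.arcsin ((1 - k₁) /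
            Real.sqrt ((η - (V k₁ - (1 + 1 / k₀) * (1 - k₁) ^ 2)) / (1 + 1 / k₀))) -
         Real.arcsin ((1 - k₂) /
            Real.sqrt ((η - (V k₁ - (1 + 1 / k₀) * (1 - k₁) ^ 2)) / (1 + 1 / k₀)))) ∧
    (η = V k₁ →
      Real.sqrt ((η - (V k₁ - (1 + 1 / k₀) * (1 - k₁) ^ 2)) / (1 + 1 / k₀)) = 1 - k₁) := by
  set c := 1 + 1 / k₀ with hc_def
  set ρ := Real.sqrt ((η - (V k₁ - c * (1 - k₁) ^ 2)) / c) with hρ_def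
  have hk₁0 : 0 < k₁ := lt_of_lt_of_le h₀ h₀₁
  have hk₁1 : k₁ < 1 := lt_of_lt_of_le h₁₂ h₂
  have hc0 : 0 < c := by
    have : 0 < 1 / k₀ := by positivity
    rw [hc_def]; linarith
  -- part 2
  have hpart2 : η = V k₁ → ρ = 1 - k₁ := by
    intro h
    have he : (η - (V k₁ - c * (1 - k₁) ^ 2)) / c = (1 - k₁) ^ 2 := by
      rw [h]; field_simp; ring
    rw [hρ_def, he, Real.sqrt_sq (by linarith)]
  -- basic facts about ρ
  have hD0 : 0 ≤ η - (V k₁ - c * (1 - k₁) ^ 2) := by nlinarith [sq_nonneg (1 - k₁)]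
  have hρsq : ρ ^ 2 = (η - (V k₁ - c * (1 - k₁) ^ 2)) / c := by
    rw [hρ_def]; exact Real.sq_sqrt (div_nonneg hD0 hc0.le)
  have hcρ : c * ρ ^ 2 = η - V k₁ + c * (1 - k₁) ^ 2 := by
    rw [hρsq, mul_div_cancel₀ _ hc0.ne']; ring
  have hρ_ge : 1 - k₁ ≤ ρ := by
    have h1 : (1 - k₁) ^ 2 ≤ (η - (V k₁ - c * (1 - k₁) ^ 2)) / c := by
      rw [le_div_iff₀ hc0]; nlinarith
    calc 1 - k₁ = Real.sqrt ((1 - k₁) ^ 2) := (Real.sqrt_sq (by linarith)).symm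
      _ ≤ ρ := Real.sqrt_le_sqrt h1
  have hρ0 : 0 < ρ := lt_of_lt_of_le (by linarith) hρ_ge
  clear_value c ρ
  -- the comparison functions
  set f : ℝ → ℝ := fun k => (Real.sqrt (η - V k))⁻¹ with hf_def
  set g : ℝ → ℝ := fun k => (Real.sqrt (c * (ρ ^ 2 - (1 - k) ^ 2)))⁻¹ with hg_def
  -- V is strictly decreasing : V k₂ < V k₁
  have hVanti : StrictAntiOn V (Set.Icc k₁ k₂) := by
    apply strictAntiOn_of_deriv_neg (convex_Icc _ _)
      (V_continuousOn (fun x hx => lt_of_lt_of_le hk₁0 hx.1))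
    intro x hx
    rw [interior_Icc] at hx
    have hx0 : 0 < x := lt_trans hk₁0 hx.1
    have hx1 : x < 1 := lt_of_lt_of_le hx.2 h₂
    rw [(V_hasDerivAt hx0).deriv]
    have : 2*x - 2/x = (2*(x^2 - 1))/x := by field_simp
    rw [this]
    apply div_neg_of_neg_of_pos _ hx0
    nlinarith
  have hV21 : V k₂ < V k₁ := hVanti ⟨le_refl _, h₁₂.le⟩ ⟨h₁₂.le, le_refl _⟩ h₁₂
  -- convexity lower bound : η - V x ≥ α (x - k₁)
  set α : ℝ := (V k₁ - V k₂) / (k₂ - k₁) with hα_def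
  have hα0 : 0 < α := div_pos (by linarith) (by linarith)
  have hαb : ∀ x ∈ Set.Icc k₁ k₂, α * (x - k₁) ≤ η - V x := by
    intro x hx
    have hd : (0:ℝ) < k₂ - k₁ := by linarith
    have hne : k₂ - k₁ ≠ 0 := ne_of_gt hd
    have ht0 : 0 ≤ (x - k₁) / (k₂ - k₁) := div_nonneg (by linarith [hx.1]) hd.le
    have hs0 : 0 ≤ (k₂ - x) / (k₂ - k₁) := div_nonneg (by linarith [hx.2]) hd.le
    have hsum : (k₂ - x) / (k₂ - k₁) + (x - k₁) / (k₂ - k₁) = 1 := by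
      rw [← add_div, show k₂ - x + (x - k₁) = k₂ - k₁ by ring, div_self hne]
    have hconv := V_convexOn.2 (Set.mem_Ioi.2 hk₁0) (Set.mem_Ioi.2 (lt_trans hk₁0 h₁₂))
      hs0 ht0 hsum
    rw [smul_eq_mul, smul_eq_mul, smul_eq_mul, smul_eq_mul] at hconv
    have hxeq : (k₂ - x) / (k₂ - k₁) * k₁ + (x - k₁) / (k₂ - k₁) * k₂ = x := by
      rw [div_mul_eq_mul_div, div_mul_eq_mul_div, ← add_div, div_eq_iff hne]
      ring
    rw [hxeq] at hconv
    rw [hα_def, div_mul_eq_mul_div, div_le_iff₀ hd]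
    have h5 := mul_le_mul_of_nonneg_left hconv hd.le
    have e : (k₂ - k₁) * ((k₂ - x) / (k₂ - k₁) * V k₁ + (x - k₁) / (k₂ - k₁) * V k₂)
        = (k₂ - x) * V k₁ + (x - k₁) * V k₂ := by
      field_simp
    rw [e] at h5
    nlinarith [h5, mul_le_mul_of_nonneg_right hη hd.le]
  -- strict monotonicity of W k = V k - c (k-1)^2
  have hW : StrictMonoOn (fun k => V k - c * (k - 1) ^ 2) (Set.Icc k₁ k₂) := by
    apply strictMonoOn_of_deriv_pos (convex_Icc _ _)
    · exact (V_continuousOn (fun x hx => lt_of_lt_of_le hk₁0 hx.1)).sub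
        (continuous_const.mul ((continuous_id.sub continuous_const).pow 2)).continuousOn
    · intro x hx
      rw [interior_Icc] at hx
      have hx0 : 0 < x := lt_trans hk₁0 hx.1
      have hx1 : x < 1 := lt_of_lt_of_le hx.2 h₂
      have hxk : k₀ < x := lt_of_le_of_lt h₀₁ hx.1
      have hq : HasDerivAt (fun k : ℝ => c * (k - 1) ^ 2) (c * (2 * (x - 1))) x := by
        have h' : HasDerivAt (fun k : ℝ => (k - 1) ^ 2) (2 * (x - 1)) x := by
          have := ((hasDerivAt_id x).sub_const 1).fun_pow 2
          simpa using this
        exact h'.const_mul c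
      rw [((V_hasDerivAt hx0).fun_sub hq).deriv]
      have key : 2*x - 2/x - c * (2 * (x - 1)) = 2 * ((x - 1) * (k₀ - x)) / (x * k₀) := by
        rw [hc_def]; field_simp; ring
      rw [key]
      apply div_pos _ (by positivity)
      have := mul_pos_of_neg_of_neg (show x - 1 < 0 by linarith) (show k₀ - x < 0 by linarith)
      linarith
  -- pointwise : η - V x < c (ρ² - (1-x)²) on Ioc, with equality at k₁
  have hPV : ∀ x ∈ Set.Ioc k₁ k₂, η - V x < c * (ρ ^ 2 - (1 - x) ^ 2) := by
    intro x hx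
    have hw := hW ⟨le_refl _, h₁₂.le⟩ ⟨hx.1.le, hx.2⟩ hx.1
    simp only [] at hw
    have e1 : c * (ρ ^ 2 - (1 - x) ^ 2) = η - V k₁ + c * (1 - k₁) ^ 2 - c * (1 - x) ^ 2 := by
      rw [mul_sub, hcρ]
    have e2 : (k₁ - 1) ^ 2 = (1 - k₁) ^ 2 := by ring
    have e3 : (x - 1) ^ 2 = (1 - x) ^ 2 := by ring
    rw [e2, e3] at hw
    linarith
  have hPVk₁ : η - V k₁ = c * (ρ ^ 2 - (1 - k₁) ^ 2) := by
    rw [mul_sub, hcρ]; ring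
  -- positivity of η - V x on Ioc
  have hpos : ∀ x ∈ Set.Ioc k₁ k₂, 0 < η - V x := by
    intro x hx
    have := hαb x ⟨hx.1.le, hx.2⟩
    nlinarith [mul_pos hα0 (sub_pos.2 hx.1)]
  have hPpos : ∀ x ∈ Set.Ioc k₁ k₂, 0 < c * (ρ ^ 2 - (1 - x) ^ 2) := fun x hx =>
    lt_trans (hpos x hx) (hPV x hx)
  -- pointwise strict inequality g < f on Ioc
  have hfg : ∀ x ∈ Set.Ioc k₁ k₂, g x < f x := by
    intro x hx
    rw [hf_def, hg_def]
    simp only []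
    have h1 : Real.sqrt (η - V x) < Real.sqrt (c * (ρ ^ 2 - (1 - x) ^ 2)) :=
      Real.sqrt_lt_sqrt (hpos x hx).le (hPV x hx)
    have h2 : 0 < Real.sqrt (η - V x) := Real.sqrt_pos.2 (hpos x hx)
    exact inv_strictAnti₀ h2 h1
  have hfg_le : ∀ x ∈ Set.Icc k₁ k₂, g x ≤ f x := by
    intro x hx
    rcases eq_or_lt_of_le hx.1 with h | h
    · rw [hf_def, hg_def]
      simp only []
      rw [← h, ← hPVk₁]
    · exact (hfg x ⟨h, hx.2⟩).le
  -- integrability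
  have hbnd_int : ∀ C : ℝ, IntervalIntegrable (fun x => C * (Real.sqrt (x - k₁))⁻¹) volume k₁ k₂ := by
    intro C
    have h1 : IntervalIntegrable (fun x : ℝ => x ^ (-(1/2) : ℝ)) volume 0 (k₂ - k₁) :=
      intervalIntegral.intervalIntegrable_rpow' (by norm_num)
    have h2 := h1.comp_sub_right k₁
    simp only [zero_add, sub_add_cancel] at h2
    rw [intervalIntegrable_iff_integrableOn_Ioc_of_le h₁₂.le] at h2 ⊢
    apply Integrable.const_mul
    apply h2.congr_fun _ measurableSet_Ioc
    intro x hx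
    show (x - k₁) ^ (-(1/2) : ℝ) = (Real.sqrt (x - k₁))⁻¹
    rw [Real.rpow_neg (by linarith [hx.1] : (0:ℝ) ≤ x - k₁), ← Real.sqrt_eq_rpow]
  have hmeas_f : AEStronglyMeasurable f (volume.restrict (Set.Ioc k₁ k₂)) := by
    apply Measurable.aestronglyMeasurable
    exact (Real.continuous_sqrt.measurable.comp (measurable_const.sub V_measurable)).inv
  have hmeas_g : AEStronglyMeasurable g (volume.restrict (Set.Ioc k₁ k₂)) := by
    apply Measurable.aestronglyMeasurable
    apply Measurable.inv
    apply Real.continuous_sqrt.measurable.comp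
    exact (((measurable_const.sub measurable_id).pow_const 2).const_sub (ρ ^ 2)).const_mul c
  have hf_int : IntervalIntegrable f volume k₁ k₂ := by
    rw [intervalIntegrable_iff_integrableOn_Ioc_of_le h₁₂.le]
    have hb := (hbnd_int (Real.sqrt α)⁻¹)
    rw [intervalIntegrable_iff_integrableOn_Ioc_of_le h₁₂.le] at hb
    apply MeasureTheory.Integrable.mono hb hmeas_f
    rw [ae_restrict_iff' measurableSet_Ioc]
    apply ae_of_all
    intro x hx
    have hx1 : 0 < x - k₁ := by linarith [hx.1]
    have hle : α * (x - k₁) ≤ η - V x := hαb x ⟨hx.1.le, hx.2⟩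
    have hb0 : 0 < α * (x - k₁) := by positivity
    rw [Real.norm_eq_abs, Real.norm_eq_abs, abs_of_nonneg (by positivity),
      abs_of_nonneg (by positivity)]
    have h1 : Real.sqrt (α * (x - k₁)) ≤ Real.sqrt (η - V x) := Real.sqrt_le_sqrt hle
    have h2 : 0 < Real.sqrt (α * (x - k₁)) := Real.sqrt_pos.2 hb0
    calc f x ≤ (Real.sqrt (α * (x - k₁)))⁻¹ := inv_anti₀ h2 h1
      _ = (Real.sqrt α)⁻¹ * (Real.sqrt (x - k₁))⁻¹ := by
          rw [Real.sqrt_mul hα0.le, mul_inv]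
  have hg_lb : ∀ x ∈ Set.Ioc k₁ k₂, (c * ρ) * (x - k₁) ≤ c * (ρ ^ 2 - (1 - x) ^ 2) := by
    intro x hx
    have h1 : x - k₁ ≤ ρ - (1 - x) := by linarith [hρ_ge, hx.1]
    have h2 : (0:ℝ) ≤ 1 - x := by linarith [hx.2]
    have h3 : 0 ≤ (ρ - (1 - x) - (x - k₁)) * (ρ + (1 - x)) :=
      mul_nonneg (by linarith) (by linarith [hρ0])
    have h4 : 0 ≤ (x - k₁) * (1 - x) := mul_nonneg (by linarith [hx.1]) h2
    have key : ρ ^ 2 - (1 - x) ^ 2 - ρ * (x - k₁)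
        = (ρ - (1 - x) - (x - k₁)) * (ρ + (1 - x)) + (x - k₁) * (1 - x) := by ring
    have h5 : ρ * (x - k₁) ≤ ρ ^ 2 - (1 - x) ^ 2 := by linarith [h3, h4, key]
    calc (c * ρ) * (x - k₁) = c * (ρ * (x - k₁)) := by ring
      _ ≤ c * (ρ ^ 2 - (1 - x) ^ 2) := mul_le_mul_of_nonneg_left h5 hc0.le
  have hg_int : IntervalIntegrable g volume k₁ k₂ := by
    rw [intervalIntegrable_iff_integrableOn_Ioc_of_le h₁₂.le]
    have hb := (hbnd_int (Real.sqrt (c * ρ))⁻¹)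
    rw [intervalIntegrable_iff_integrableOn_Ioc_of_le h₁₂.le] at hb
    apply MeasureTheory.Integrable.mono hb hmeas_g
    rw [ae_restrict_iff' measurableSet_Ioc]
    apply ae_of_all
    intro x hx
    have hx1 : 0 < x - k₁ := by linarith [hx.1]
    have hcρ0 : 0 < c * ρ := mul_pos hc0 hρ0
    have hb0 : 0 < (c * ρ) * (x - k₁) := by positivity
    rw [Real.norm_eq_abs, Real.norm_eq_abs, abs_of_nonneg (by positivity),
      abs_of_nonneg (by positivity)]
    have h1 : Real.sqrt ((c * ρ) * (x - k₁)) ≤ Real.sqrt (c * (ρ ^ 2 - (1 - x) ^ 2)) :=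
      Real.sqrt_le_sqrt (hg_lb x hx)
    have h2 : 0 < Real.sqrt ((c * ρ) * (x - k₁)) := Real.sqrt_pos.2 hb0
    calc g x ≤ (Real.sqrt ((c * ρ) * (x - k₁)))⁻¹ := inv_anti₀ h2 h1
      _ = (Real.sqrt (c * ρ))⁻¹ * (Real.sqrt (x - k₁))⁻¹ := by
          rw [Real.sqrt_mul hcρ0.le, mul_inv]
  -- FTC for g
  have hFTC : ∫ x in k₁..k₂, g x
      = (Real.sqrt c)⁻¹ * (Real.arcsin ((1 - k₁) / ρ) - Real.arcsin ((1 - k₂) / ρ)) := by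
    set F : ℝ → ℝ := fun x => -(Real.sqrt c)⁻¹ * Real.arcsin ((1 - x) / ρ) with hF_def
    have hcont : ContinuousOn F (Set.Icc k₁ k₂) :=
      (continuous_const.mul (Real.continuous_arcsin.comp
        ((continuous_const.sub continuous_id).div_const ρ))).continuousOn
    have hderiv : ∀ x ∈ Set.Ioo k₁ k₂, HasDerivWithinAt F (g x) (Set.Ioi x) x := by
      intro x hx
      have hu : HasDerivAt (fun y : ℝ => (1 - y) / ρ) (-1 / ρ) x := by
        simpa using ((hasDerivAt_id x).const_sub 1).div_const ρ
      have hlt : (1 - x) / ρ < 1 := by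
        rw [div_lt_one hρ0]; linarith [hρ_ge, hx.1]
      have hgt : -1 < (1 - x) / ρ := by
        have : 0 ≤ (1 - x) / ρ := div_nonneg (by linarith [hx.2, h₂]) hρ0.le
        linarith
      have ha := (Real.hasDerivAt_arcsin (ne_of_gt hgt) (ne_of_lt hlt)).comp x hu
      have hd := ha.const_mul (-(Real.sqrt c)⁻¹)
      have hs0 : 0 < Real.sqrt (1 - ((1 - x) / ρ) ^ 2) := by
        apply Real.sqrt_pos.2
        nlinarith [hlt, hgt]
      have hval : -(Real.sqrt c)⁻¹ * (1 / Real.sqrt (1 - ((1 - x) / ρ) ^ 2) * (-1 / ρ)) = g x := by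
        rw [hg_def]
        simp only []
        have hu2 : Real.sqrt (c * (ρ ^ 2 - (1 - x) ^ 2))
            = Real.sqrt c * (ρ * Real.sqrt (1 - ((1 - x) / ρ) ^ 2)) := by
          rw [Real.sqrt_mul hc0.le]
          congr 1
          rw [show ρ ^ 2 - (1 - x) ^ 2 = ρ ^ 2 * (1 - ((1 - x) / ρ) ^ 2) by
            field_simp]
          rw [Real.sqrt_mul (sq_nonneg ρ), Real.sqrt_sq hρ0.le]
        rw [hu2]
        have hsc : Real.sqrt c ≠ 0 := (Real.sqrt_pos.2 hc0).ne'
        have hs2 : Real.sqrt (1 - ((1 - x) / ρ) ^ 2) ≠ 0 := hs0.ne'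
        have hs3 : Real.sqrt (ρ ^ 2 - (1 - x) ^ 2) ≠ 0 := by
          refine (Real.sqrt_pos.2 ?_).ne'
          have h1x : 0 ≤ 1 - x := by linarith [hx.2]
          have h1x' : 1 - x < ρ := by rwa [div_lt_one hρ0] at hlt
          nlinarith
        field_simp [hρ0.ne', hs3]
      exact (hval ▸ hd).hasDerivWithinAt
    have := intervalIntegral.integral_eq_sub_of_hasDeriv_right_of_le h₁₂.le hcont hderiv hg_int
    rw [this, hF_def]
    ring
  -- assembling
  have ha1 : k₁ < (k₁ + k₂)/2 := by linarith
  have ha2 : (k₁ + k₂)/2 < k₂ := by linarith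
  have hsub1 : Set.uIcc k₁ ((k₁ + k₂)/2) ⊆ Set.uIcc k₁ k₂ :=
    Set.uIcc_subset_uIcc Set.left_mem_uIcc (by
      rw [Set.mem_uIcc]; left; constructor <;> linarith)
  have hsub2 : Set.uIcc ((k₁ + k₂)/2) k₂ ⊆ Set.uIcc k₁ k₂ :=
    Set.uIcc_subset_uIcc (by rw [Set.mem_uIcc]; left; constructor <;> linarith)
      Set.right_mem_uIcc
  have hf1 := hf_int.mono_set hsub1
  have hf2 := hf_int.mono_set hsub2
  have hg1 := hg_int.mono_set hsub1
  have hg2 := hg_int.mono_set hsub2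
  have hsplit_f : ∫ x in k₁..k₂, f x
      = (∫ x in k₁..(k₁ + k₂)/2, f x) + ∫ x in ((k₁ + k₂)/2)..k₂, f x :=
    (intervalIntegral.integral_add_adjacent_intervals hf1 hf2).symm
  have hsplit_g : ∫ x in k₁..k₂, g x
      = (∫ x in k₁..(k₁ + k₂)/2, g x) + ∫ x in ((k₁ + k₂)/2)..k₂, g x :=
    (intervalIntegral.integral_add_adjacent_intervals hg1 hg2).symm
  have hmono : (∫ x in k₁..(k₁ + k₂)/2, g x) ≤ ∫ x in k₁..(k₁ + k₂)/2, f x := by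
    apply intervalIntegral.integral_mono_on ha1.le hg1 hf1
    intro x hx
    exact hfg_le x ⟨hx.1, le_trans hx.2 ha2.le⟩
  have hstrict : (∫ x in ((k₁ + k₂)/2)..k₂, g x) < ∫ x in ((k₁ + k₂)/2)..k₂, f x := by
    have hpos' := intervalIntegral.intervalIntegral_pos_of_pos_on (hf2.sub hg2)
      (fun x hx => sub_pos.2 (hfg x ⟨lt_trans ha1 hx.1, hx.2.le⟩)) ha2
    rw [intervalIntegral.integral_sub hf2 hg2] at hpos'
    linarith
  constructor
  · rw [gt_iff_lt, ← hFTC]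
    calc ∫ x in k₁..k₂, g x
        = (∫ x in k₁..(k₁ + k₂)/2, g x) + ∫ x in ((k₁ + k₂)/2)..k₂, g x := hsplit_g
      _ < (∫ x in k₁..(k₁ + k₂)/2, f x) + ∫ x in ((k₁ + k₂)/2)..k₂, f x := by linarith
      _ = ∫ x in k₁..k₂, f x := hsplit_f.symm
  · exact hpart2
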